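/- Let N ≥ 1, and let β = (β_i^j)_{i,j=1,…,N} be a matrix with all entries β_i^j ∈ (0,1) such that Σ_j β_i^j = 1 for every i and Σ_i β_i^j = 1 for every j. Let C be any generalized loop of the complete bipartite graph K_{N,N}, and define r_C = (∏_{i ∈ V_L(C)} (1 − q_i)) · (∏_{j ∈ V_R(C)} (1 − q^j)) · ∏_{(i,j) ∈ E(C)} β_i^j/(1 − β_i^j), where q_i and q^j denote the degrees in C of left vertex i and right vertex j. Then |r_C| ≤ 1. -/

import Mathlib

open Finset

/-- Unweighted AM-GM in natural-power form. -/
lemma amgm_pow {α : Type*} (s : Finset α) (x : α → ℝ) (hx : ∀ a ∈ s, 0 ≤ x a) :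
    (s.card : ℝ) ^ s.card * ∏ a ∈ s, x a ≤ (∑ a ∈ s, x a) ^ s.card := by
  rcases Nat.eq_zero_or_pos s.card with h0 | hpos
  · rw [Finset.card_eq_zero.mp h0]; simp
  have hn : (s.card : ℝ) ≠ 0 := by positivity
  have hgm := Real.geom_mean_le_arith_mean_weighted s (fun _ => (s.card : ℝ)⁻¹) x
    (fun i _ => by positivity)
    (by simp [Finset.sum_const]; field_simp) hx
  have hprod : ∏ a ∈ s, x a ^ ((s.card : ℝ)⁻¹) = (∏ a ∈ s, x a) ^ ((s.card : ℝ)⁻¹) :=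
    Real.finset_prod_rpow s x hx _
  rw [hprod] at hgm
  have hsum : ∑ i ∈ s, ((s.card : ℝ)⁻¹) * x i = (∑ a ∈ s, x a) / s.card := by
    rw [← Finset.mul_sum]; ring
  rw [hsum] at hgm
  have hP : (0:ℝ) ≤ ∏ a ∈ s, x a := Finset.prod_nonneg hx
  have h2 : ((∏ a ∈ s, x a) ^ ((s.card : ℝ)⁻¹)) ^ (s.card : ℕ)
      ≤ ((∑ a ∈ s, x a) / s.card) ^ (s.card : ℕ) :=
    pow_le_pow_left₀ (Real.rpow_nonneg hP _) hgm _
  have h3 : ((∏ a ∈ s, x a) ^ ((s.card : ℝ)⁻¹)) ^ (s.card : ℕ) = ∏ a ∈ s, x a := by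
    rw [← Real.rpow_natCast ((∏ a ∈ s, x a) ^ ((s.card : ℝ)⁻¹)), ← Real.rpow_mul hP]
    rw [inv_mul_cancel₀ hn, Real.rpow_one]
  rw [h3, div_pow] at h2
  have hnn : (0:ℝ) < (s.card : ℝ) ^ s.card := by positivity
  calc (s.card : ℝ) ^ s.card * ∏ a ∈ s, x a
      ≤ (s.card : ℝ) ^ s.card * ((∑ a ∈ s, x a) ^ s.card / (s.card : ℝ) ^ s.card) := by
        exact mul_le_mul_of_nonneg_left h2 (le_of_lt hnn)
    _ = (∑ a ∈ s, x a) ^ s.card := by field_simp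

/-- Product of `erase`-sums lower bound. -/
lemma prod_erase_sum_ge {α : Type*} [DecidableEq α] (F : Finset α) (x : α → ℝ)
    (hx : ∀ a ∈ F, 0 < x a) (hq : 2 ≤ F.card) :
    ((F.card : ℝ) - 1) ^ F.card * ∏ a ∈ F, x a
      ≤ ∏ a ∈ F, ∑ b ∈ F.erase a, x b := by
  set q := F.card with hqdef
  have hP : (0:ℝ) < ∏ a ∈ F, x a := Finset.prod_pos hx
  have hcast : ∀ a ∈ F, ((F.erase a).card : ℝ) = (q : ℝ) - 1 := by
    intro a ha
    rw [Finset.card_erase_of_mem ha, Nat.cast_sub (by omega)]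
    simp [hqdef]
  -- per-element AM-GM
  have key : ∀ a ∈ F, ((q:ℝ) - 1) ^ (q-1) * ∏ b ∈ F.erase a, x b
      ≤ (∑ b ∈ F.erase a, x b) ^ (q-1) := by
    intro a ha
    have := amgm_pow (F.erase a) x (fun b hb => (hx b (Finset.mem_of_mem_erase hb)).le)
    rwa [hcast a ha, Finset.card_erase_of_mem ha] at this
  -- take products
  have hprod : ∏ a ∈ F, (((q:ℝ) - 1) ^ (q-1) * ∏ b ∈ F.erase a, x b)
      ≤ ∏ a ∈ F, (∑ b ∈ F.erase a, x b) ^ (q-1) := by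
    apply Finset.prod_le_prod
    · intro a ha
      have h1 : (0:ℝ) ≤ ((q:ℝ) - 1) ^ (q-1) := by
        have : (1:ℝ) ≤ (q:ℝ) := by exact_mod_cast (by omega : 1 ≤ q)
        apply pow_nonneg; linarith
      exact mul_nonneg h1 (Finset.prod_nonneg fun b hb =>
        (hx b (Finset.mem_of_mem_erase hb)).le)
    · exact key
  have herase : ∏ a ∈ F, ∏ b ∈ F.erase a, x b = (∏ a ∈ F, x a) ^ (q-1) := by
    have : ∀ a ∈ F, ∏ b ∈ F.erase a, x b = (∏ b ∈ F, x b) / x a := by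
      intro a ha
      rw [eq_div_iff (hx a ha).ne', mul_comm, Finset.mul_prod_erase F x ha]
    rw [Finset.prod_congr rfl this, Finset.prod_div_distrib, Finset.prod_const]
    rw [div_eq_iff hP.ne', ← pow_succ, ← hqdef]
    congr 1
    omega
  have hL : ∏ a ∈ F, (((q:ℝ) - 1) ^ (q-1) * ∏ b ∈ F.erase a, x b)
      = (((q:ℝ) - 1) ^ q * ∏ a ∈ F, x a) ^ (q-1) := by
    rw [Finset.prod_mul_distrib, Finset.prod_const, herase, mul_pow, ← pow_mul, ← pow_mul,
      ← hqdef, Nat.mul_comm]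
  rw [hL, Finset.prod_pow] at hprod
  have hq1 : (q:ℝ) - 1 ≥ 1 := by
    have : (2:ℝ) ≤ (q:ℝ) := by exact_mod_cast hq
    linarith
  have hTnn : (0:ℝ) ≤ ∏ a ∈ F, ∑ b ∈ F.erase a, x b :=
    Finset.prod_nonneg fun a ha => Finset.sum_nonneg fun b hb =>
      (hx b (Finset.mem_of_mem_erase hb)).le
  have hLnn : (0:ℝ) ≤ ((q:ℝ) - 1) ^ q * ∏ a ∈ F, x a := by positivity
  exact (pow_le_pow_iff_left₀ hLnn hTnn (by omega : q - 1 ≠ 0)).mp hprod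

/-- Vertex lemma: the contribution of a single vertex is at most 1. -/
lemma vertex_bound {α : Type*} [DecidableEq α] (F : Finset α) (x : α → ℝ)
    (hx : ∀ a ∈ F, 0 < x a) (hq : 2 ≤ F.card) :
    (1 - (F.card : ℝ)) ^ 2 * ∏ a ∈ F, x a / (∑ b ∈ F.erase a, x b) ≤ 1 := by
  set q := F.card with hqdef
  have hP : (0:ℝ) < ∏ a ∈ F, x a := Finset.prod_pos hx
  have hT : ∀ a ∈ F, 0 < ∑ b ∈ F.erase a, x b := by
    intro a ha
    apply Finset.sum_pos (fun b hb => hx b (Finset.mem_of_mem_erase hb))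
    rw [← Finset.card_pos, Finset.card_erase_of_mem ha]
    omega
  have hTP : (0:ℝ) < ∏ a ∈ F, ∑ b ∈ F.erase a, x b := Finset.prod_pos hT
  have hq1 : (1:ℝ) ≤ (q:ℝ) - 1 := by
    have : (2:ℝ) ≤ (q:ℝ) := by exact_mod_cast hq
    linarith
  have hkey := prod_erase_sum_ge F x hx hq
  rw [Finset.prod_div_distrib]
  have hstep : (∏ a ∈ F, x a) / (∏ a ∈ F, ∑ b ∈ F.erase a, x b)
      ≤ (∏ a ∈ F, x a) / (((q:ℝ) - 1) ^ q * ∏ a ∈ F, x a) := by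
    apply div_le_div_of_nonneg_left hP.le (by positivity) hkey
  have hsq : (1 - (q:ℝ)) ^ 2 = ((q:ℝ) - 1) ^ 2 := by ring
  calc (1 - (q:ℝ)) ^ 2 * ((∏ a ∈ F, x a) / (∏ a ∈ F, ∑ b ∈ F.erase a, x b))
      ≤ (1 - (q:ℝ)) ^ 2 * ((∏ a ∈ F, x a) / (((q:ℝ) - 1) ^ q * ∏ a ∈ F, x a)) := by
        exact mul_le_mul_of_nonneg_left hstep (by positivity)
    _ = ((q:ℝ) - 1) ^ 2 / ((q:ℝ) - 1) ^ q := by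
        rw [hsq]; field_simp
    _ ≤ 1 := by
        rw [div_le_one (by positivity)]
        exact pow_le_pow_right₀ hq1 hq
/-- The degree of left vertex `i` in the edge set `C ⊆ K_{N,N}`. -/
def degL {N : ℕ} (C : Finset (Fin N × Fin N)) (i : Fin N) : ℕ :=
  (C.filter (fun e => e.1 = i)).card

/-- The degree of right vertex `j` in the edge set `C ⊆ K_{N,N}`. -/
def degR {N : ℕ} (C : Finset (Fin N × Fin N)) (j : Fin N) : ℕ :=
  (C.filter (fun e => e.2 = j)).card

/-- A generalized loop: a nonempty edge subset of `K_{N,N}` in which every vertex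
incident to an edge has degree at least 2. -/
def IsGenLoop {N : ℕ} (C : Finset (Fin N × Fin N)) : Prop :=
  C.Nonempty ∧ ∀ e ∈ C, 2 ≤ degL C e.1 ∧ 2 ≤ degR C e.2

/-- The loop-series term `r_C` associated with beliefs `β` and a generalized loop `C`:
`r_C = ∏_{i ∈ V_L(C)} (1 - q_i) · ∏_{j ∈ V_R(C)} (1 - q^j) · ∏_{(i,j) ∈ C} β_i^j/(1-β_i^j)`. -/
noncomputable def loopTerm {N : ℕ} (β : Fin N → Fin N → ℝ)
    (C : Finset (Fin N × Fin N)) : ℝ :=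
  (∏ i ∈ C.image Prod.fst, (1 - (degL C i : ℝ))) *
    (∏ j ∈ C.image Prod.snd, (1 - (degR C j : ℝ))) *
    ∏ e ∈ C, β e.1 e.2 / (1 - β e.1 e.2)

/-- For doubly stochastic beliefs with entries in `(0,1)`, every generalized-loop
contribution `r_C` to the loop series satisfies `|r_C| ≤ 1`. -/
theorem abs_loopTerm_le_one (N : ℕ) (hN : 1 ≤ N) (β : Fin N → Fin N → ℝ)
    (hβ : ∀ i j, β i j ∈ Set.Ioo (0 : ℝ) 1)
    (hrow : ∀ i, ∑ j, β i j = 1) (hcol : ∀ j, ∑ i, β i j = 1)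
    (C : Finset (Fin N × Fin N)) (hC : IsGenLoop C) :
    |loopTerm β C| ≤ 1 := by
  obtain ⟨hCne, hdeg⟩ := hC
  rw [← sq_le_one_iff_abs_le_one]
  set x : Fin N × Fin N → ℝ := fun e => β e.1 e.2 with hxdef
  have hx0 : ∀ e, 0 < x e := fun e => (hβ e.1 e.2).1
  have hx1 : ∀ e, x e < 1 := fun e => (hβ e.1 e.2).2
  set fibL : Fin N → Finset (Fin N × Fin N) := fun i => C.filter (fun e => e.1 = i) with hfibL
  set fibR : Fin N → Finset (Fin N × Fin N) := fun j => C.filter (fun e => e.2 = j) with hfibR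
  set SL : Fin N × Fin N → ℝ := fun e => ∑ b ∈ (fibL e.1).erase e, x b with hSL
  set SR : Fin N × Fin N → ℝ := fun e => ∑ b ∈ (fibR e.2).erase e, x b with hSR
  -- row/column sums over fibers are at most 1
  have hsumL : ∀ i : Fin N, ∑ e ∈ fibL i, x e ≤ 1 := by
    intro i
    have h1 : ∑ e ∈ fibL i, x e = ∑ e ∈ fibL i, β i e.2 := by
      apply Finset.sum_congr rfl
      intro e he
      have : e.1 = i := (Finset.mem_filter.mp he).2
      simp [hxdef, this]
    have hinj : ∀ e ∈ fibL i, ∀ e' ∈ fibL i, e.2 = e'.2 → e = e' := by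
      intro e he e' he' h2
      have h3 : e.1 = i := (Finset.mem_filter.mp he).2
      have h4 : e'.1 = i := (Finset.mem_filter.mp he').2
      exact Prod.ext (h3.trans h4.symm) h2
    have h2 : ∑ j ∈ (fibL i).image Prod.snd, β i j = ∑ e ∈ fibL i, β i e.2 :=
      Finset.sum_image hinj
    have h3 : ∑ j ∈ (fibL i).image Prod.snd, β i j ≤ ∑ j : Fin N, β i j :=
      Finset.sum_le_sum_of_subset_of_nonneg (Finset.subset_univ _)
        (fun j _ _ => (hβ i j).1.le)
    rw [h1, ← h2]
    rw [hrow i] at h3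
    exact h3
  have hsumR : ∀ j : Fin N, ∑ e ∈ fibR j, x e ≤ 1 := by
    intro j
    have h1 : ∑ e ∈ fibR j, x e = ∑ e ∈ fibR j, β e.1 j := by
      apply Finset.sum_congr rfl
      intro e he
      have : e.2 = j := (Finset.mem_filter.mp he).2
      simp [hxdef, this]
    have hinj : ∀ e ∈ fibR j, ∀ e' ∈ fibR j, e.1 = e'.1 → e = e' := by
      intro e he e' he' h2
      have h3 : e.2 = j := (Finset.mem_filter.mp he).2
      have h4 : e'.2 = j := (Finset.mem_filter.mp he').2
      exact Prod.ext h2 (h3.trans h4.symm)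
    have h2 : ∑ i ∈ (fibR j).image Prod.fst, β i j = ∑ e ∈ fibR j, β e.1 j :=
      Finset.sum_image hinj
    have h3 : ∑ i ∈ (fibR j).image Prod.fst, β i j ≤ ∑ i : Fin N, β i j :=
      Finset.sum_le_sum_of_subset_of_nonneg (Finset.subset_univ _)
        (fun i _ _ => (hβ i j).1.le)
    rw [h1, ← h2]
    rw [hcol j] at h3
    exact h3
  have hmemL : ∀ e ∈ C, e ∈ fibL e.1 := fun e he => Finset.mem_filter.mpr ⟨he, rfl⟩
  have hmemR : ∀ e ∈ C, e ∈ fibR e.2 := fun e he => Finset.mem_filter.mpr ⟨he, rfl⟩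
  have hSLle : ∀ e ∈ C, SL e ≤ 1 - x e := by
    intro e he
    have := Finset.add_sum_erase (fibL e.1) x (hmemL e he)
    have h2 := hsumL e.1
    simp only [hSL]
    linarith
  have hSRle : ∀ e ∈ C, SR e ≤ 1 - x e := by
    intro e he
    have := Finset.add_sum_erase (fibR e.2) x (hmemR e he)
    have h2 := hsumR e.2
    simp only [hSR]
    linarith
  have hSLpos : ∀ e ∈ C, 0 < SL e := by
    intro e he
    apply Finset.sum_pos (fun b _ => hx0 b)
    rw [← Finset.card_pos, Finset.card_erase_of_mem (hmemL e he)]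
    have h2 : 2 ≤ (fibL e.1).card := (hdeg e he).1
    omega
  have hSRpos : ∀ e ∈ C, 0 < SR e := by
    intro e he
    apply Finset.sum_pos (fun b _ => hx0 b)
    rw [← Finset.card_pos, Finset.card_erase_of_mem (hmemR e he)]
    have h2 : 2 ≤ (fibR e.2).card := (hdeg e he).2
    omega
  -- per-edge bound
  have hedge : ∀ e ∈ C, (x e / (1 - x e)) ^ 2 ≤ (x e / SL e) * (x e / SR e) := by
    intro e he
    rw [div_pow, div_mul_div_comm, ← sq]
    apply div_le_div_of_nonneg_left (sq_nonneg _) (mul_pos (hSLpos e he) (hSRpos e he))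
    have h1 : 0 < 1 - x e := by linarith [hx1 e]
    calc SL e * SR e ≤ (1 - x e) * (1 - x e) :=
          mul_le_mul (hSLle e he) (hSRle e he) (hSRpos e he).le h1.le
      _ = (1 - x e) ^ 2 := by ring
  -- product over edges
  have hP2 : ∏ e ∈ C, (x e / (1 - x e)) ^ 2
      ≤ (∏ e ∈ C, x e / SL e) * (∏ e ∈ C, x e / SR e) := by
    rw [← Finset.prod_mul_distrib]
    exact Finset.prod_le_prod (fun e _ => sq_nonneg _) hedge
  -- fiberwise regrouping and vertex bounds
  have hL1 : (∏ i ∈ C.image Prod.fst, (1 - (degL C i : ℝ)) ^ 2) * ∏ e ∈ C, x e / SL e ≤ 1 := by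
    have hfib : ∏ e ∈ C, x e / SL e
        = ∏ i ∈ C.image Prod.fst, ∏ e ∈ fibL i, (x e / SL e) :=
      (Finset.prod_fiberwise_of_maps_to (fun e he => Finset.mem_image_of_mem _ he) _).symm
    rw [hfib, ← Finset.prod_mul_distrib]
    apply Finset.prod_le_one
    · intro i _
      apply mul_nonneg (sq_nonneg _)
      exact Finset.prod_nonneg fun e he =>
        div_nonneg (hx0 e).le (Finset.sum_nonneg fun b _ => (hx0 b).le)
    · intro i hi
      obtain ⟨e₀, he₀, he₀i⟩ := Finset.mem_image.mp hi
      have hq : 2 ≤ (fibL i).card := by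
        have := (hdeg e₀ he₀).1
        rwa [he₀i] at this
      have hSLfib : ∀ e ∈ fibL i, SL e = ∑ b ∈ (fibL i).erase e, x b := by
        intro e he
        have : e.1 = i := (Finset.mem_filter.mp he).2
        simp only [hSL, this]
      have hcard : degL C i = (fibL i).card := rfl
      calc (1 - (degL C i : ℝ)) ^ 2 * ∏ e ∈ fibL i, (x e / SL e)
          = (1 - ((fibL i).card : ℝ)) ^ 2
            * ∏ e ∈ fibL i, x e / ∑ b ∈ (fibL i).erase e, x b := by
            rw [hcard]
            congr 1
            exact Finset.prod_congr rfl fun e he => by rw [hSLfib e he]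
        _ ≤ 1 := vertex_bound (fibL i) x (fun e _ => hx0 e) hq
  have hR1 : (∏ j ∈ C.image Prod.snd, (1 - (degR C j : ℝ)) ^ 2) * ∏ e ∈ C, x e / SR e ≤ 1 := by
    have hfib : ∏ e ∈ C, x e / SR e
        = ∏ j ∈ C.image Prod.snd, ∏ e ∈ fibR j, (x e / SR e) :=
      (Finset.prod_fiberwise_of_maps_to (fun e he => Finset.mem_image_of_mem _ he) _).symm
    rw [hfib, ← Finset.prod_mul_distrib]
    apply Finset.prod_le_one
    · intro j _
      apply mul_nonneg (sq_nonneg _)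
      exact Finset.prod_nonneg fun e he =>
        div_nonneg (hx0 e).le (Finset.sum_nonneg fun b _ => (hx0 b).le)
    · intro j hj
      obtain ⟨e₀, he₀, he₀j⟩ := Finset.mem_image.mp hj
      have hq : 2 ≤ (fibR j).card := by
        have := (hdeg e₀ he₀).2
        rwa [he₀j] at this
      have hSRfib : ∀ e ∈ fibR j, SR e = ∑ b ∈ (fibR j).erase e, x b := by
        intro e he
        have : e.2 = j := (Finset.mem_filter.mp he).2
        simp only [hSR, this]
      have hcard : degR C j = (fibR j).card := rfl
      calc (1 - (degR C j : ℝ)) ^ 2 * ∏ e ∈ fibR j, (x e / SR e)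
          = (1 - ((fibR j).card : ℝ)) ^ 2
            * ∏ e ∈ fibR j, x e / ∑ b ∈ (fibR j).erase e, x b := by
            rw [hcard]
            congr 1
            exact Finset.prod_congr rfl fun e he => by rw [hSRfib e he]
        _ ≤ 1 := vertex_bound (fibR j) x (fun e _ => hx0 e) hq
  -- assembly
  have hA2 : (0:ℝ) ≤ ∏ i ∈ C.image Prod.fst, (1 - (degL C i : ℝ)) ^ 2 :=
    Finset.prod_nonneg fun i _ => sq_nonneg _
  have hB2 : (0:ℝ) ≤ ∏ j ∈ C.image Prod.snd, (1 - (degR C j : ℝ)) ^ 2 :=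
    Finset.prod_nonneg fun j _ => sq_nonneg _
  have hQR : (0:ℝ) ≤ ∏ e ∈ C, x e / SR e :=
    Finset.prod_nonneg fun e he => div_nonneg (hx0 e).le (hSRpos e he).le
  have hexp : loopTerm β C ^ 2
      = (∏ i ∈ C.image Prod.fst, (1 - (degL C i : ℝ)) ^ 2)
        * (∏ j ∈ C.image Prod.snd, (1 - (degR C j : ℝ)) ^ 2)
        * ∏ e ∈ C, (x e / (1 - x e)) ^ 2 := by
    rw [loopTerm, mul_pow, mul_pow, Finset.prod_pow, Finset.prod_pow, Finset.prod_pow]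
  rw [hexp]
  calc (∏ i ∈ C.image Prod.fst, (1 - (degL C i : ℝ)) ^ 2)
        * (∏ j ∈ C.image Prod.snd, (1 - (degR C j : ℝ)) ^ 2)
        * ∏ e ∈ C, (x e / (1 - x e)) ^ 2
      ≤ (∏ i ∈ C.image Prod.fst, (1 - (degL C i : ℝ)) ^ 2)
        * (∏ j ∈ C.image Prod.snd, (1 - (degR C j : ℝ)) ^ 2)
        * ((∏ e ∈ C, x e / SL e) * (∏ e ∈ C, x e / SR e)) :=
        mul_le_mul_of_nonneg_left hP2 (mul_nonneg hA2 hB2)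
    _ = ((∏ i ∈ C.image Prod.fst, (1 - (degL C i : ℝ)) ^ 2) * ∏ e ∈ C, x e / SL e)
        * ((∏ j ∈ C.image Prod.snd, (1 - (degR C j : ℝ)) ^ 2) * ∏ e ∈ C, x e / SR e) := by
        ring
    _ ≤ 1 * 1 := mul_le_mul hL1 hR1 (mul_nonneg hB2 hQR) zero_le_one
    _ = 1 := one_mul 1
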